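/- Assume the family (t_n^{(k)}) is equipotentially almost periodic and f : ℝ → ℂ^q satisfies (H3). Then for every ε > 0 the set Γ_ε ∩ T(f, ε) is relatively dense in ℝ. -/

import Mathlib

open Filter

noncomputable section

abbrev Vec (q : ℕ) := EuclideanSpace ℂ (Fin q)

/-- A set of reals is relatively dense. -/
def RelDenseR (E : Set ℝ) : Prop :=
  ∃ l : ℝ, 0 < l ∧ ∀ m : ℝ, (E ∩ Set.Icc m (m + l)).Nonempty

/-- A set of integers is relatively dense in `ℤ`. -/
def RelDenseZ (E : Set ℤ) : Prop :=
  ∃ l : ℤ, 0 < l ∧ ∀ m : ℤ, (E ∩ Set.Icc m (m + l)).Nonempty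

/-- Almost periodic (continuous) function on `ℝ`. -/
def APR {E : Type*} [NormedAddCommGroup E] (g : ℝ → E) : Prop :=
  Continuous g ∧ ∀ ε : ℝ, 0 < ε →
    RelDenseR {τ : ℝ | ∀ t : ℝ, ‖g (t + τ) - g t‖ ≤ ε}

/-- Almost periodic sequence on `ℤ`. -/
def APZ {E : Type*} [NormedAddCommGroup E] (x : ℤ → E) : Prop :=
  ∀ ε : ℝ, 0 < ε → RelDenseZ {τ : ℤ | ∀ n : ℤ, ‖x (n + τ) - x n‖ ≤ ε}

/-- The family `t_n^{(k)} = t_{n+k} - t_n` is equipotentially almost periodic. -/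
def EquiAP (ts : ℤ → ℝ) : Prop :=
  ∀ ε : ℝ, 0 < ε → RelDenseZ {T : ℤ | ∀ k n : ℤ,
    |(ts (T + n + k) - ts (T + n)) - (ts (n + k) - ts n)| ≤ ε}

/-- The `(H3)` translation set of a (possibly discontinuous) function `f`. -/
def Tset {E : Type*} [NormedAddCommGroup E] (ts : ℤ → ℝ) (f : ℝ → E) (ε : ℝ) : Set ℝ :=
  {τ : ℝ | ∀ s : ℝ, (∀ n : ℤ, s ∉ Set.Ioo (ts n - ε) (ts n + ε)) → ‖f (s + τ) - f s‖ ≤ ε}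

/-- Hypothesis `(H3)`: almost periodicity for piecewise continuous functions. -/
def H3cond {E : Type*} [NormedAddCommGroup E] (ts : ℤ → ℝ) (f : ℝ → E) : Prop :=
  ∀ ε : ℝ, 0 < ε → RelDenseR (Tset ts f ε) ∧
    ∃ δ : ℝ, 0 < δ ∧ ∀ τ' : ℝ, |τ'| ≤ δ → ∀ n : ℤ, ∀ s : ℝ,
      s ∈ Set.Icc (ts n) (ts (n + 1)) → s + τ' ∈ Set.Icc (ts n) (ts (n + 1)) →
      ‖f (s + τ') - f s‖ ≤ ε

/-- `Γ_ε`: the set of `r ∈ ℝ` with `sup_n |t_n^{(k)} - r| ≤ ε` for some `k`. -/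
def GammaSet (ts : ℤ → ℝ) (ε : ℝ) : Set ℝ :=
  {r : ℝ | ∃ k : ℤ, ∀ n : ℤ, |ts (n + k) - ts n - r| ≤ ε}

/-- `P_r(ε)`: the set of `k ∈ ℤ` with `sup_n |t_n^{(k)} - r| ≤ ε`. -/
def PkSet (ts : ℤ → ℝ) (ε : ℝ) (r : ℝ) : Set ℤ :=
  {k : ℤ | ∀ n : ℤ, |ts (n + k) - ts n - r| ≤ ε}

/-! ### Auxiliary lemmas for STATEMENT 18 -/

lemma floor_eq_abs_le {a b c : ℝ} (hc : 0 < c) (h : ⌊a / c⌋ = ⌊b / c⌋) : |a - b| ≤ c := by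
  have h1 := Int.floor_le (a / c)
  have h2 := Int.lt_floor_add_one (a / c)
  have h3 := Int.floor_le (b / c)
  have h4 := Int.lt_floor_add_one (b / c)
  rw [h] at h1 h2
  have e1 : a - b < c := by
    have e : (a - b) / c < 1 := by rw [sub_div]; linarith
    linarith [(div_lt_one hc).mp e]
  have e2 : b - a < c := by
    have e : (b - a) / c < 1 := by rw [sub_div]; linarith
    linarith [(div_lt_one hc).mp e]
  rw [abs_le]; constructor <;> linarith

private noncomputable def listBnd : List ℝ → ℝ := fun L => L.foldr (fun x M => max |x| M) 0

lemma listBnd_nonneg (L : List ℝ) : 0 ≤ listBnd L := by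
  induction L with
  | nil => simp [listBnd]
  | cons y L ih => simp only [listBnd, List.foldr] at *; exact le_trans ih (le_max_right _ _)

lemma listBnd_mem {L : List ℝ} {x : ℝ} (hx : x ∈ L) : |x| ≤ listBnd L := by
  induction L with
  | nil => simp at hx
  | cons y L ih =>
    rcases List.mem_cons.mp hx with h | h
    · subst h; exact le_max_left _ _
    · exact le_trans (ih h) (le_max_right _ _)

private noncomputable def ptList (v : ℝ → ℝ) : ℕ → List ℝ
  | 0 => []
  | n+1 => v (listBnd (ptList v n)) :: ptList v n

lemma avoid_seq (D : Set ℝ)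
    (hwin : ∀ l : ℝ, 0 < l → ∃ a : ℝ, ∀ x ∈ D, x ∉ Set.Icc a (a + l)) :
    ∃ s : ℕ → ℝ, ∀ i j : ℕ, i < j → s j - s i ∉ D := by
  have hwin' : ∀ M : ℝ, ∃ w : ℝ, ∀ x : ℝ, |x| ≤ M → w - x ∉ D := by
    intro M
    rcases le_or_gt M 0 with hM | hM
    · obtain ⟨a, ha⟩ := hwin 2 (by norm_num)
      refine ⟨a + 1, fun x hx hD => ha _ hD ?_⟩
      have h1 := abs_le.mp hx
      constructor
      · linarith [h1.2]
      · linarith [h1.1]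
    · obtain ⟨a, ha⟩ := hwin (2 * M + 2) (by linarith)
      refine ⟨a + M + 1, fun x hx hD => ha _ hD ?_⟩
      have h1 := abs_le.mp hx
      constructor
      · linarith [h1.2]
      · linarith [h1.1]
  choose v hv using hwin'
  refine ⟨fun n => v (listBnd (ptList v n)), fun i j hij => ?_⟩
  have hmem : ∀ i n : ℕ, i < n → v (listBnd (ptList v i)) ∈ ptList v n := by
    intro i n
    induction n with
    | zero => omega
    | succ n ih =>
      intro h
      rcases Nat.lt_succ_iff_lt_or_eq.mp h with h' | h'
      · exact List.mem_cons_of_mem _ (ih h')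
      · subst h'; exact List.mem_cons_self
  exact hv (listBnd (ptList v j)) _ (listBnd_mem (hmem i j hij))

section TsAux

variable {ts : ℤ → ℝ}

lemma mexists (hts : StrictMono ts) (htop : Tendsto ts atTop atTop)
    (hbot : Tendsto ts atBot atBot) (s : ℝ) : ∃ m : ℤ, ts m ≤ s ∧ s < ts (m + 1) := by
  obtain ⟨N, hN⟩ := (tendsto_atTop_atTop.mp htop) (s + 1)
  obtain ⟨N', hN'⟩ := (tendsto_atBot_atBot.mp hbot) s
  obtain ⟨m, hm, hmax⟩ := Int.exists_greatest_of_bdd (P := fun z => ts z ≤ s)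
    ⟨N, fun z hz => by
      by_contra h
      push_neg at h
      have := hN z (by omega)
      linarith⟩ ⟨N', hN' N' le_rfl⟩
  refine ⟨m, hm, ?_⟩
  by_contra h
  push_neg at h
  have := hmax (m + 1) h
  omega

lemma gap_bound (hEqui : EquiAP ts) :
    ∃ g : ℝ, 0 < g ∧ ∀ n : ℤ, ts (n + 1) - ts n ≤ g := by
  obtain ⟨l, hl, hE⟩ := hEqui 1 one_pos
  have hne : (Finset.Icc (0:ℤ) l).Nonempty := ⟨0, by simp; omega⟩
  set M := ((Finset.Icc (0:ℤ) l).image (fun m => ts (m + 1) - ts m)).max'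
    (hne.image _) with hM
  refine ⟨max M 0 + 1, by positivity, fun n => ?_⟩
  obtain ⟨T, hT, hTicc⟩ := hE (-n)
  have h1 := hT 1 n
  have ha : T + n ∈ Finset.Icc (0:ℤ) l := by
    simp only [Set.mem_Icc] at hTicc
    simp only [Finset.mem_Icc]
    omega
  have h2 : ts (T + n + 1) - ts (T + n) ≤ M := by
    have := Finset.le_max' ((Finset.Icc (0:ℤ) l).image (fun m => ts (m + 1) - ts m)) _
      (Finset.mem_image_of_mem (fun m => ts (m + 1) - ts m) ha)
    simpa using this
  have h3 := abs_le.mp h1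
  have h4 : ts (n + 1) - ts n ≤ (ts (T + n + 1) - ts (T + n)) + 1 := by linarith [h3.2]
  calc ts (n + 1) - ts n ≤ M + 1 := by linarith
    _ ≤ max M 0 + 1 := by simp [le_max_left]

lemma sep_bound (hts : StrictMono ts) (htop : Tendsto ts atTop atTop) (hEqui : EquiAP ts) :
    ∃ K : ℤ, 1 ≤ K ∧ ∀ n : ℤ, 2 ≤ ts (n + K) - ts n := by
  obtain ⟨l, hl, hE⟩ := hEqui 1 one_pos
  have hne : (Finset.Icc (0:ℤ) l).Nonempty := ⟨0, by simp; omega⟩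
  set M := ((Finset.Icc (0:ℤ) l).image ts).max' (hne.image _) with hM
  obtain ⟨N, hN⟩ := (tendsto_atTop_atTop.mp htop) (M + 3)
  refine ⟨max N 1, by omega, fun n => ?_⟩
  obtain ⟨T, hT, hTicc⟩ := hE (-n)
  have h1 := hT (max N 1) n
  simp only [Set.mem_Icc] at hTicc
  have ha : T + n ∈ Finset.Icc (0:ℤ) l := by simp only [Finset.mem_Icc]; omega
  have h2 : ts (T + n) ≤ M := Finset.le_max' _ _ (Finset.mem_image_of_mem _ ha)
  have h3 : M + 3 ≤ ts (T + n + max N 1) := hN _ (by omega)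
  have h4 := abs_le.mp h1
  linarith [h4.1]

lemma escape (hts : StrictMono ts) (K : ℤ) (hK : ∀ n : ℤ, 2 ≤ ts (n + K) - ts n)
    {θ : ℝ} (hθ : 0 < θ) (hsmall : 2 * θ * ((K.toNat : ℝ) + 1) ≤ 1) (t : ℝ) :
    ∃ t' : ℝ, |t' - t| ≤ 2 * θ * ((K.toNat : ℝ) + 1) ∧ ∀ n : ℤ, θ ≤ |t' - ts n| := by
  set Kn := K.toNat with hKndef
  by_cases hgood : ∃ i : ℕ, i ≤ Kn ∧
      ∀ n : ℤ, ts n ∉ Set.Ico (t + 2*θ*i) (t + 2*θ*(i+1))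
  · obtain ⟨i, hi, hno⟩ := hgood
    have hic : (i : ℝ) ≤ (Kn : ℝ) := Nat.cast_le.mpr hi
    refine ⟨t + 2*θ*i + θ, ?_, fun n => ?_⟩
    · rw [show t + 2*θ*i + θ - t = 2*θ*i + θ by ring, abs_of_nonneg (by positivity)]
      nlinarith
    · have h1 := hno n
      simp only [Set.mem_Ico, not_and, not_lt] at h1
      rcases lt_or_ge (ts n) (t + 2*θ*i) with h2 | h2
      · have h3 : θ ≤ t + 2*θ*i + θ - ts n := by linarith
        exact le_trans h3 (le_abs_self _)
      · have h3 := h1 h2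
        have h4 : θ ≤ ts n - (t + 2*θ*i + θ) := by linarith
        rw [abs_sub_comm]
        exact le_trans h4 (le_abs_self _)
  · exfalso
    push_neg at hgood
    have hg' : ∀ i : ℕ, ∃ n : ℤ, i ≤ Kn → ts n ∈ Set.Ico (t + 2*θ*i) (t + 2*θ*(i+1)) := by
      intro i
      by_cases h : i ≤ Kn
      · obtain ⟨n, hn⟩ := hgood i h
        exact ⟨n, fun _ => hn⟩
      · exact ⟨0, fun h' => absurd h' h⟩
    choose nn hnn using hg'
    have hmono : ∀ i j : ℕ, i ≤ Kn → j ≤ Kn → i < j → nn i < nn j := by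
      intro i j hi hj hij
      have h1 := hnn i hi
      have h2 := hnn j hj
      simp only [Set.mem_Ico] at h1 h2
      have hc : ((i:ℝ) + 1) ≤ (j:ℝ) := by exact_mod_cast hij
      have h5 : ts (nn i) < ts (nn j) := by nlinarith [h1.2, h2.1]
      exact hts.lt_iff_lt.mp h5
    have hstep : ∀ j : ℕ, j ≤ Kn → nn 0 + (j : ℤ) ≤ nn j := by
      intro j
      induction j with
      | zero => intro _; simp
      | succ j ih =>
        intro hj
        have h1 := ih (by omega)
        have h2 := hmono j (j+1) (by omega) hj (by omega)
        push_cast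
        push_cast at h1
        omega
    have hKnK : (Kn : ℤ) = K := Int.toNat_of_nonneg (by
      by_contra hneg
      push_neg at hneg
      have h6 := hK 0
      have h0 : ts (0 + K) ≤ ts 0 := le_of_lt (hts (by omega))
      linarith)
    have h5 := hstep Kn le_rfl
    have h6 : ts (nn 0 + K) ≤ ts (nn Kn) := by
      rcases eq_or_lt_of_le (by omega : nn 0 + K ≤ nn Kn) with h | h
      · rw [h]
      · exact le_of_lt (hts h)
    have h7 := hK (nn 0)
    have h8 := hnn 0 (by omega)
    have h9 := hnn Kn le_rfl
    simp only [Set.mem_Ico] at h8 h9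
    have h10 : ts (nn Kn) < t + 2*θ*((Kn:ℝ)+1) := by
      have := h9.2; push_cast at this ⊢; linarith
    have h11 : t ≤ ts (nn 0) := by
      have := h8.1; push_cast at this; linarith
    linarith

variable {E : Type*} [NormedAddCommGroup E] {f : ℝ → E}

lemma uc (hts : StrictMono ts) (htop : Tendsto ts atTop atTop) (hbot : Tendsto ts atBot atBot)
    (K : ℤ) (hK1 : 1 ≤ K) (hK : ∀ n : ℤ, 2 ≤ ts (n + K) - ts n)
    (hf : H3cond ts f) {α : ℝ} (hα : 0 < α) :
    ∃ δ : ℝ, 0 < δ ∧ δ ≤ 1 ∧ ∀ x y : ℝ, |y - x| ≤ δ → ‖f y - f x‖ ≤ α := by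
  set Kn := K.toNat with hKndef
  have hKn : (Kn : ℤ) = K := Int.toNat_of_nonneg (by omega)
  set α' := α / (Kn + 1) with hα'def
  have hα'pos : 0 < α' := by positivity
  obtain ⟨δ₀, hδ₀, hH⟩ := (hf α' hα'pos).2
  refine ⟨min δ₀ 1, by positivity, min_le_right _ _, ?_⟩
  have claim : ∀ d : ℕ, ∀ x y : ℝ, ∀ mx my : ℤ,
      ts mx ≤ x → x < ts (mx + 1) → ts my ≤ y → y < ts (my + 1) →
      x ≤ y → y - x ≤ min δ₀ 1 → my ≤ mx + d → ‖f y - f x‖ ≤ (d + 1) * α' := by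
    intro d
    induction d with
    | zero =>
      intro x y mx my h1 h2 h3 h4 hxy hd hm
      have hmxmy : mx = my := by
        have h5 : ts mx < ts (my + 1) := by linarith
        have h6 : mx < my + 1 := hts.lt_iff_lt.mp h5
        omega
      subst hmxmy
      have h7 := hH (y - x)
        (by rw [abs_of_nonneg (by linarith)]; exact le_trans hd (min_le_left _ _))
        mx x ⟨h1, le_of_lt h2⟩ ⟨by linarith, by linarith⟩
      rw [show x + (y - x) = y by ring] at h7
      simpa using h7
    | succ d ih =>
      intro x y mx my h1 h2 h3 h4 hxy hd hm
      rcases le_or_gt my mx with hc | hc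
      · have h8 := ih x y mx my h1 h2 h3 h4 hxy hd (by omega)
        have h9 : (0:ℝ) ≤ α' := le_of_lt hα'pos
        push_cast
        push_cast at h8
        nlinarith
      · have hj0 : ts (mx + 1) ≤ ts my := hts.le_iff_le.mpr (by omega)
        have hj1 : ts (mx + 1) ≤ y := le_trans hj0 h3
        have e1 := hH (ts (mx + 1) - x)
          (by rw [abs_of_nonneg (by linarith)]; exact le_trans (by linarith) (min_le_left _ _))
          mx x ⟨h1, le_of_lt h2⟩
          ⟨by linarith, by rw [show x + (ts (mx+1) - x) = ts (mx+1) by ring]⟩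
        rw [show x + (ts (mx+1) - x) = ts (mx+1) by ring] at e1
        have e2 := ih (ts (mx + 1)) y (mx + 1) my le_rfl (hts (by omega)) h3 h4 hj1
          (by linarith) (by omega)
        have tri : ‖f y - f x‖ ≤ ‖f y - f (ts (mx+1))‖ + ‖f (ts (mx+1)) - f x‖ :=
          norm_sub_le_norm_sub_add_norm_sub (f y) (f (ts (mx+1))) (f x)
        push_cast
        push_cast at e2
        linarith
  intro x y hxy
  rcases le_total x y with hle | hle
  · obtain ⟨mx, hmx1, hmx2⟩ := mexists hts htop hbot x
    obtain ⟨my, hmy1, hmy2⟩ := mexists hts htop hbot y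
    have habs : y - x ≤ min δ₀ 1 := le_trans (le_abs_self _) hxy
    have hmm : my ≤ mx + Kn := by
      by_contra hcon
      push_neg at hcon
      have h10 : mx + 1 + K ≤ my := by omega
      have h11 : ts (mx + 1 + K) ≤ ts my := hts.le_iff_le.mpr h10
      have h12 : 2 ≤ ts (mx + 1 + K) - ts (mx + 1) := hK (mx + 1)
      have h13 : y - x ≤ 1 := le_trans habs (min_le_right _ _)
      linarith
    have h14 := claim Kn x y mx my hmx1 hmx2 hmy1 hmy2 hle habs hmm
    have h15 : ((Kn:ℝ) + 1) * α' = α := by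
      rw [hα'def]; field_simp
    linarith
  · obtain ⟨mx, hmx1, hmx2⟩ := mexists hts htop hbot x
    obtain ⟨my, hmy1, hmy2⟩ := mexists hts htop hbot y
    have habs : x - y ≤ min δ₀ 1 := by
      rw [abs_sub_comm] at hxy; exact le_trans (le_abs_self _) hxy
    have hmm : mx ≤ my + Kn := by
      by_contra hcon
      push_neg at hcon
      have h10 : my + 1 + K ≤ mx := by omega
      have h11 : ts (my + 1 + K) ≤ ts mx := hts.le_iff_le.mpr h10
      have h12 : 2 ≤ ts (my + 1 + K) - ts (my + 1) := hK (my + 1)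
      have h13 : x - y ≤ 1 := le_trans habs (min_le_right _ _)
      linarith
    have h14 := claim Kn y x my mx hmy1 hmy2 hmx1 hmx2 hle habs hmm
    have h15 : ((Kn:ℝ) + 1) * α' = α := by
      rw [hα'def]; field_simp
    rw [norm_sub_rev]
    linarith

lemma bohr (hts : StrictMono ts) (htop : Tendsto ts atTop atTop) (hbot : Tendsto ts atBot atBot)
    (K : ℤ) (hK1 : 1 ≤ K) (hK : ∀ n : ℤ, 2 ≤ ts (n + K) - ts n)
    (hf : H3cond ts f) {α : ℝ} (hα : 0 < α) :
    ∃ Lb : ℝ, 0 < Lb ∧ ∀ a : ℝ, ∃ τ : ℝ, τ ∈ Set.Icc a (a + Lb) ∧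
      ∀ t : ℝ, ‖f (t + τ) - f t‖ ≤ α := by
  obtain ⟨δ₁, hδ₁, hδ₁1, hUC⟩ := uc hts htop hbot K hK1 hK hf (show (0:ℝ) < α/3 by positivity)
  have hKpos : (0:ℝ) < (K.toNat:ℝ) + 1 := by positivity
  set θ := min (α/3) (δ₁ / (2*((K.toNat:ℝ)+1))) with hθdef
  have hθpos : 0 < θ := lt_min (by positivity) (by positivity)
  have hθle : θ ≤ δ₁ / (2*((K.toNat:ℝ)+1)) := min_le_right _ _
  have hθα : θ ≤ α/3 := min_le_left _ _
  have hkey : 2*θ*((K.toNat:ℝ)+1) ≤ δ₁ := by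
    have h1 : 2*θ*((K.toNat:ℝ)+1) ≤ 2*(δ₁ / (2*((K.toNat:ℝ)+1)))*((K.toNat:ℝ)+1) := by
      gcongr
    have h2 : 2*(δ₁ / (2*((K.toNat:ℝ)+1)))*((K.toNat:ℝ)+1) = δ₁ := by field_simp
    linarith
  have hsmall : 2*θ*((K.toNat:ℝ)+1) ≤ 1 := le_trans hkey hδ₁1
  obtain ⟨Lb, hLb, hT⟩ := (hf θ hθpos).1
  refine ⟨Lb, hLb, fun a => ?_⟩
  obtain ⟨τ, hτT, hτI⟩ := hT a
  refine ⟨τ, hτI, fun t => ?_⟩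
  obtain ⟨t', ht1, ht2⟩ := escape hts K hK hθpos hsmall t
  have e1 : ‖f (t + τ) - f (t' + τ)‖ ≤ α/3 := by
    apply hUC
    rw [show (t + τ) - (t' + τ) = -(t' - t) by ring, abs_neg]
    exact le_trans ht1 hkey
  have e3 : ‖f t' - f t‖ ≤ α/3 := by
    apply hUC
    exact le_trans ht1 hkey
  have e2 : ‖f (t' + τ) - f t'‖ ≤ θ := by
    apply hτT t'
    intro n hmem
    simp only [Set.mem_Ioo] at hmem
    have h4 : |t' - ts n| < θ := abs_lt.mpr ⟨by linarith [hmem.1], by linarith [hmem.2]⟩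
    exact absurd (ht2 n) (not_le.mpr h4)
  calc ‖f (t + τ) - f t‖
      ≤ ‖f (t + τ) - f (t' + τ)‖ + ‖f (t' + τ) - f t‖ :=
        norm_sub_le_norm_sub_add_norm_sub _ _ _
    _ ≤ ‖f (t + τ) - f (t' + τ)‖ + (‖f (t' + τ) - f t'‖ + ‖f t' - f t‖) := by
        linarith [norm_sub_le_norm_sub_add_norm_sub (f (t' + τ)) (f t') (f t)]
    _ ≤ α/3 + (θ + α/3) := by linarith
    _ ≤ α := by linarith

end TsAux

/-- if `(t_n^{(k)})` is equipotentially almost periodic and `f` satisfies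
`(H3)`, then `Γ_ε ∩ T(f, ε)` is relatively dense. -/
theorem gamma_inter_translation_set_relatively_dense {q : ℕ} (hq : 1 ≤ q)
    (ts : ℤ → ℝ) (hts : StrictMono ts)
    (htop : Tendsto ts atTop atTop) (hbot : Tendsto ts atBot atBot)
    (hEqui : EquiAP ts)
    (f : ℝ → Vec q) (hfloc : MeasureTheory.LocallyIntegrable f)
    (hf : H3cond ts f) :
    ∀ ε : ℝ, 0 < ε → RelDenseR (GammaSet ts ε ∩ Tset ts f ε) := by
  intro ε hε
  by_contra hND
  rw [RelDenseR] at hND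
  push_neg at hND
  have hwin : ∀ l : ℝ, 0 < l →
      ∃ a : ℝ, ∀ x ∈ GammaSet ts ε ∩ Tset ts f ε, x ∉ Set.Icc a (a + l) := by
    intro l hl
    obtain ⟨a, ha⟩ := hND l hl
    exact ⟨a, fun x hx hI => (Set.eq_empty_iff_forall_notMem.mp ha) x ⟨hx, hI⟩⟩
  obtain ⟨K, hK1, hKsep⟩ := sep_bound hts htop hEqui
  obtain ⟨g, hg, hgap⟩ := gap_bound hEqui
  set θ := ε / 5 with hθdef
  have hθ : 0 < θ := by rw [hθdef]; positivity
  obtain ⟨δ₂, hδ₂, hδ₂1, hUC⟩ := uc hts htop hbot K hK1 hKsep hf hθ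
  set δ' := min δ₂ θ with hδ'def
  have hδ'pos : 0 < δ' := lt_min hδ₂ hθ
  have hδ'θ : δ' ≤ θ := min_le_right _ _
  have hδ'δ₂ : δ' ≤ δ₂ := min_le_left _ _
  obtain ⟨l, hl, hE⟩ := hEqui θ hθ
  obtain ⟨Lb, hLb, hB⟩ := bohr hts htop hbot K hK1 hKsep hf hθ
  -- selection of data for every real s
  have hsel : ∀ s : ℝ, ∃ mm T' : ℤ, ∃ τ : ℝ,
      (ts mm ≤ s ∧ s < ts (mm + 1)) ∧
      ((∀ k n : ℤ, |(ts (T' + n + k) - ts (T' + n)) - (ts (n + k) - ts n)| ≤ θ) ∧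
        -mm ≤ T' ∧ T' ≤ -mm + l) ∧
      ((∀ t : ℝ, ‖f (t + τ) - f t‖ ≤ θ) ∧ -s ≤ τ ∧ τ ≤ -s + Lb) := by
    intro s
    obtain ⟨mm, h1, h2⟩ := mexists hts htop hbot s
    obtain ⟨T', hT'mem, hT'icc⟩ := hE (-mm)
    obtain ⟨τ, hτicc, hτI⟩ := hB (-s)
    exact ⟨mm, T', τ, ⟨h1, h2⟩, ⟨hT'mem, hT'icc.1, hT'icc.2⟩, ⟨hτI, hτicc.1, hτicc.2⟩⟩
  choose mF TF τF hmF hTF hτF using hsel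
  have hE' : ∀ s : ℝ, ∀ a b : ℤ, |ts (TF s + a) - ts (TF s + b) - (ts a - ts b)| ≤ θ := by
    intro s a b
    have h := (hTF s).1 (a - b) b
    rw [show TF s + b + (a - b) = TF s + a by ring, show b + (a - b) = a by ring] at h
    exact h
  -- the key step : equal colors imply membership
  have key : ∀ s₁ s₂ : ℝ, mF s₁ + TF s₁ = mF s₂ + TF s₂ →
      |(s₁ - ts (mF s₁)) - (s₂ - ts (mF s₂))| ≤ δ' →
      |(s₁ + τF s₁) - (s₂ + τF s₂)| ≤ δ' →
      s₁ - s₂ ∈ GammaSet ts ε ∩ Tset ts f ε := by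
    intro s₁ s₂ hv hφ hc
    constructor
    · refine ⟨mF s₁ - mF s₂, fun n => ?_⟩
      have h1 := hE' s₁ (mF s₁) (n + (mF s₁ - mF s₂))
      have h2 := hE' s₂ (mF s₂) n
      rw [show TF s₁ + (n + (mF s₁ - mF s₂)) = TF s₂ + n by omega,
          show TF s₁ + mF s₁ = TF s₂ + mF s₂ by omega] at h1
      have ha1 := abs_le.mp h1
      have ha2 := abs_le.mp h2
      have haφ := abs_le.mp hφ
      rw [abs_le]
      constructor <;>
        linarith [ha1.1, ha1.2, ha2.1, ha2.2, haφ.1, haφ.2]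
    · intro x hx
      have t1 := (hτF s₁).1 (x + (s₁ - s₂))
      have t3 := (hτF s₂).1 x
      have t2 : ‖f (x + (s₁ - s₂) + τF s₁) - f (x + τF s₂)‖ ≤ θ := by
        apply hUC
        rw [show (x + (s₁ - s₂) + τF s₁) - (x + τF s₂) = (s₁ + τF s₁) - (s₂ + τF s₂) by ring]
        exact le_trans hc hδ'δ₂
      have t1' : ‖f (x + (s₁ - s₂)) - f (x + (s₁ - s₂) + τF s₁)‖ ≤ θ := by
        rw [norm_sub_rev]; exact t1
      have tri1 : ‖f (x + (s₁ - s₂)) - f x‖ ≤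
          ‖f (x + (s₁ - s₂)) - f (x + (s₁ - s₂) + τF s₁)‖ +
          ‖f (x + (s₁ - s₂) + τF s₁) - f x‖ :=
        norm_sub_le_norm_sub_add_norm_sub _ _ _
      have tri2 : ‖f (x + (s₁ - s₂) + τF s₁) - f x‖ ≤
          ‖f (x + (s₁ - s₂) + τF s₁) - f (x + τF s₂)‖ + ‖f (x + τF s₂) - f x‖ :=
        norm_sub_le_norm_sub_add_norm_sub _ _ _
      have : ‖f (x + (s₁ - s₂)) - f x‖ ≤ 3 * θ := by linarith
      linarith
  -- colors
  let Col : ℝ → ℤ × ℤ × ℤ := fun s =>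
    (mF s + TF s, ⌊(s - ts (mF s)) / δ'⌋, ⌊(s + τF s) / δ'⌋)
  set F : Finset (ℤ × ℤ × ℤ) :=
    (Finset.Icc (0:ℤ) l) ×ˢ ((Finset.Icc (0:ℤ) ⌊g / δ'⌋) ×ˢ (Finset.Icc (0:ℤ) ⌊Lb / δ'⌋))
    with hFdef
  have hrange : ∀ s : ℝ, Col s ∈ F := by
    intro s
    have h1a := (hTF s).2.1
    have h1b := (hTF s).2.2
    have h2 := hmF s
    have h3a := (hτF s).2.1
    have h3b := (hτF s).2.2
    have hφ0 : 0 ≤ s - ts (mF s) := by linarith [h2.1]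
    have hφg : s - ts (mF s) ≤ g := by linarith [h2.2, hgap (mF s)]
    have hc0 : 0 ≤ s + τF s := by linarith
    have hcL : s + τF s ≤ Lb := by linarith
    simp only [hFdef, Finset.mem_product, Finset.mem_Icc, Col]
    refine ⟨⟨by omega, by omega⟩, ⟨?_, ?_⟩, ?_, ?_⟩
    · exact Int.floor_nonneg.mpr (div_nonneg hφ0 (le_of_lt hδ'pos))
    · exact Int.floor_le_floor (by gcongr)
    · exact Int.floor_nonneg.mpr (div_nonneg hc0 (le_of_lt hδ'pos))
    · exact Int.floor_le_floor (by gcongr)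
  obtain ⟨sq, hsq⟩ := avoid_seq _ hwin
  obtain ⟨i, hi, j, hj, hij, hCol⟩ :=
    Finset.exists_ne_map_eq_of_card_lt_of_maps_to
      (s := Finset.range (F.card + 1)) (t := F)
      (by simp) (fun k _ => hrange (sq k))
  have c1 : mF (sq i) + TF (sq i) = mF (sq j) + TF (sq j) := congrArg Prod.fst hCol
  have c23 := congrArg Prod.snd hCol
  have c2 : ⌊(sq i - ts (mF (sq i))) / δ'⌋ = ⌊(sq j - ts (mF (sq j))) / δ'⌋ :=
    congrArg Prod.fst c23
  have c3 : ⌊(sq i + τF (sq i)) / δ'⌋ = ⌊(sq j + τF (sq j)) / δ'⌋ :=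
    congrArg Prod.snd c23
  have hφc := floor_eq_abs_le hδ'pos c2
  have hcc := floor_eq_abs_le hδ'pos c3
  rcases lt_or_gt_of_ne hij with h | h
  · exact hsq i j h (key (sq j) (sq i) c1.symm
      (by rw [abs_sub_comm]; exact hφc) (by rw [abs_sub_comm]; exact hcc))
  · exact hsq j i h (key (sq i) (sq j) c1 hφc hcc)

end
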